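/- arXiv:2306.12879 — 2 statements merged into one kernel-verified Lean document; each statement's English description precedes it below -/
import Mathlib

section
/- Let P_0 be a positive definite symmetric n×n real matrix. Then there exist a constant σ_0 > 0 (depending only on n), unit vectors ξ_1, …, ξ_{n*} in S^{n-1} with n* = n(n+1)/2, and linear maps L_i from the space of symmetric n×n matrices to ℝ, such that every symmetric matrix P satisfies P = Σ_{i=1}^{n*} L_i(P) ξ_i ⊗ ξ_i, and moreover L_i(P) > 0 for every i whenever |P − P_0| ≤ σ_0. -/
attribute [local instance] Matrix.frobeniusNormedAddCommGroup

open Matrix Finset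
open scoped MatrixOrder

namespace NashAux

variable {n : ℕ}

noncomputable def wv (k l : Fin n) : Fin n → ℝ :=
  fun j => (if k = j then (1:ℝ) else 0) + (if l = j then 1 else 0)

noncomputable def cf (k l : Fin n) (Q : Matrix (Fin n) (Fin n) ℝ) : ℝ :=
  if k = l then Q k k / 2 - (∑ m, (Q k m + Q m k)) / 8 else (Q k l + Q l k) / 2

lemma wv_swap (k l : Fin n) : wv k l = wv l k := by
  funext j; simp [wv, add_comm]

lemma cf_swap (k l : Fin n) (Q : Matrix (Fin n) (Fin n) ℝ) : cf k l Q = cf l k Q := by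
  unfold cf
  rcases eq_or_ne k l with h | h
  · subst h; simp
  · simp [h, Ne.symm h]; ring

noncomputable def cfL (k l : Fin n) : Matrix (Fin n) (Fin n) ℝ →ₗ[ℝ] ℝ where
  toFun := cf k l
  map_add' := by
    intro Q R
    unfold cf
    split <;> simp [Matrix.add_apply, Finset.sum_add_distrib] <;> ring
  map_smul' := by
    intro c Q
    unfold cf
    split <;> simp [Matrix.smul_apply, smul_eq_mul, Finset.sum_add_distrib, ← Finset.mul_sum] <;>
      ring

noncomputable def conjL (C : Matrix (Fin n) (Fin n) ℝ) :
    Matrix (Fin n) (Fin n) ℝ →ₗ[ℝ] Matrix (Fin n) (Fin n) ℝ where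
  toFun P := C * P * Cᵀ
  map_add' := by intro P R; show C*(P+R)*Cᵀ = C*P*Cᵀ + C*R*Cᵀ; rw [Matrix.mul_add, Matrix.add_mul]
  map_smul' := by intro c P; show C*(c • P)*Cᵀ = c • (C*P*Cᵀ); rw [Matrix.mul_smul, Matrix.smul_mul]

lemma double_sum {M : Type*} [AddCommMonoid M] (f : Fin n × Fin n → M)
    (hf : ∀ p : Fin n × Fin n, f p.swap = f p) :
    (∑ p : {p : Fin n × Fin n // p.1 ≤ p.2}, f p.1) + ∑ p : {p : Fin n × Fin n // p.1 ≤ p.2}, f p.1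
      = (∑ p : Fin n × Fin n, f p) + ∑ k, f (k, k) := by
  classical
  have hsub : (∑ p : {p : Fin n × Fin n // p.1 ≤ p.2}, f p.1)
      = ∑ p ∈ univ.filter (fun p : Fin n × Fin n => p.1 ≤ p.2), f p :=
    (Finset.sum_subtype _ (by simp) f).symm
  have hswap : (∑ p ∈ univ.filter (fun p : Fin n × Fin n => p.1 ≤ p.2), f p)
      = ∑ p ∈ univ.filter (fun p : Fin n × Fin n => p.2 ≤ p.1), f p := by
    refine Finset.sum_nbij' (fun p => p.swap) (fun p => p.swap) ?_ ?_ ?_ ?_ ?_ <;>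
      simp [hf]
  have hsplit : (∑ p ∈ univ.filter (fun p : Fin n × Fin n => p.1 ≤ p.2), f p)
      = (∑ p ∈ univ.filter (fun p : Fin n × Fin n => p.1 < p.2), f p)
        + ∑ p ∈ univ.filter (fun p : Fin n × Fin n => p.1 = p.2), f p := by
    rw [← Finset.sum_union]
    · apply Finset.sum_congr _ (fun _ _ => rfl)
      rw [← Finset.filter_or]
      exact Finset.filter_congr (by intros; simp [le_iff_lt_or_eq])
    · rw [Finset.disjoint_filter]
      intro p _ h
      simp [h.ne]
  have hcompl : (∑ p ∈ univ.filter (fun p : Fin n × Fin n => p.1 < p.2), f p)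
      + (∑ p ∈ univ.filter (fun p : Fin n × Fin n => p.2 ≤ p.1), f p)
      = ∑ p : Fin n × Fin n, f p := by
    have h1 : Finset.filter (fun p : Fin n × Fin n => p.2 ≤ p.1) univ
        = Finset.filter (fun p : Fin n × Fin n => ¬ p.1 < p.2) univ :=
      Finset.filter_congr (by intros; simp [not_lt])
    rw [h1]
    exact Finset.sum_filter_add_sum_filter_not _ _ _
  have hdiag : (∑ p ∈ univ.filter (fun p : Fin n × Fin n => p.1 = p.2), f p)
      = ∑ k, f (k, k) := by
    refine Finset.sum_nbij' (fun p => p.1) (fun k => (k, k)) ?_ ?_ ?_ ?_ ?_ <;> simp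
  rw [hsub]
  nth_rewrite 2 [hswap]
  rw [hsplit, hdiag, ← hcompl]
  abel

lemma main_sum (Q : Matrix (Fin n) (Fin n) ℝ) (hQ : Q.IsSymm) :
    ((∑ p : Fin n × Fin n, cf p.1 p.2 Q • vecMulVec (wv p.1 p.2) (wv p.1 p.2)) +
      ∑ k : Fin n, cf k k Q • vecMulVec (wv k k) (wv k k)) = Q + Q := by
  have hsy : ∀ a b, Q b a = Q a b := fun a b => hQ.apply a b
  have hcf : ∀ k l, cf k l Q = ((Q k l + Q l k)/2) +
      (if k = l then (- Q k k /2 - (∑ m, (Q k m + Q m k))/8) else 0) := by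
    intro k l
    unfold cf
    rcases eq_or_ne k l with h | h
    · subst h; simp; ring
    · simp [h]
  ext a b
  simp only [Matrix.add_apply, Matrix.sum_apply, Matrix.smul_apply, Matrix.vecMulVec_apply,
    smul_eq_mul, Fintype.sum_prod_type, hcf, wv]
  simp only [add_mul, mul_add, ite_mul, mul_ite, zero_mul, mul_zero, one_mul, mul_one,
    zero_add, add_zero, Finset.sum_add_distrib, Finset.sum_ite_eq, Finset.sum_ite_eq',
    Finset.mem_univ, if_true, Finset.sum_const_zero, Finset.sum_ite_irrel]
  rcases eq_or_ne a b with h | h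
  · subst h
    simp only [if_pos rfl, if_true, ← Finset.sum_div, Finset.sum_add_distrib]
    ring
  · simp only [if_neg h, if_neg (Ne.symm h), Finset.sum_const_zero, add_zero, zero_add]
    rw [hsy]
    ring

lemma base (Q : Matrix (Fin n) (Fin n) ℝ) (hQ : Q.IsSymm) :
    (∑ p : {p : Fin n × Fin n // p.1 ≤ p.2},
      cf p.1.1 p.1.2 Q • vecMulVec (wv p.1.1 p.1.2) (wv p.1.1 p.1.2)) = Q := by
  have hf : ∀ p : Fin n × Fin n,
      (fun p : Fin n × Fin n => cf p.1 p.2 Q • vecMulVec (wv p.1 p.2) (wv p.1 p.2)) p.swap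
        = (fun p : Fin n × Fin n => cf p.1 p.2 Q • vecMulVec (wv p.1 p.2) (wv p.1 p.2)) p := by
    intro p
    simp only [Prod.fst_swap, Prod.snd_swap]
    rw [cf_swap, wv_swap]
  have h2 := double_sum (fun p : Fin n × Fin n => cf p.1 p.2 Q • vecMulVec (wv p.1 p.2) (wv p.1 p.2)) hf
  simp only at h2
  rw [main_sum Q hQ] at h2
  have h3 : (2:ℝ) • (∑ p : {p : Fin n × Fin n // p.1 ≤ p.2},
      cf p.1.1 p.1.2 Q • vecMulVec (wv p.1.1 p.1.2) (wv p.1.1 p.1.2)) = (2:ℝ) • Q := by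
    rw [two_smul, two_smul]
    exact h2
  exact smul_right_injective _ two_ne_zero h3

lemma vecMulVec_conj (A : Matrix (Fin n) (Fin n) ℝ) (x : Fin n → ℝ) :
    vecMulVec (A *ᵥ x) (A *ᵥ x) = A * vecMulVec x x * Aᵀ := by
  ext a b
  simp only [vecMulVec_apply, Matrix.mul_apply, mulVec, dotProduct, transpose_apply,
    vecMulVec_apply]
  rw [Finset.sum_mul_sum]
  rw [Finset.sum_comm]
  congr 1; funext j
  rw [Finset.sum_mul]
  congr 1; funext i
  ring



noncomputable def Qz (n : ℕ) : Matrix (Fin n) (Fin n) ℝ :=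
  (1 - (1:ℝ)/(n+1)) • 1 + ((1:ℝ)/(n+1)) • Matrix.of (fun _ _ => (1:ℝ))

lemma Qz_apply (k l : Fin n) :
    Qz n k l = (1 - (1:ℝ)/(n+1)) * (if k = l then 1 else 0) + (1:ℝ)/(n+1) := by
  simp [Qz, Matrix.add_apply, Matrix.smul_apply, Matrix.one_apply, smul_eq_mul]

lemma Qz_symm : (Qz n).IsSymm := by
  ext k l
  simp only [Matrix.transpose_apply, Qz_apply]
  rcases eq_or_ne k l with h | h
  · subst h; rfl
  · simp [h, Ne.symm h]

lemma Qz_posDef : (Qz n).PosDef := by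
  refine Matrix.PosDef.of_dotProduct_mulVec_pos ?_ ?_
  · rw [Matrix.IsHermitian, conjTranspose_eq_transpose_of_trivial]
    exact Qz_symm
  · intro x hx
    have hn : (0:ℝ) < (n:ℝ) + 1 := by positivity
    obtain ⟨j, hj⟩ := Function.ne_iff.mp hx
    have hn1 : (1:ℝ) ≤ (n:ℝ) := by
      have := j.pos
      exact_mod_cast Nat.one_le_cast.mpr this
    have heps : (1:ℝ)/((n:ℝ)+1) < 1 := (div_lt_one hn).mpr (by linarith)
    have hmv : ∀ k, (Qz n *ᵥ x) k = (1 - 1/((n:ℝ)+1)) * x k + (1/((n:ℝ)+1)) * ∑ m, x m := by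
      intro k
      simp only [mulVec, dotProduct, Qz_apply, add_mul, ite_mul, one_mul, zero_mul,
        Finset.sum_add_distrib, mul_ite, mul_zero, Finset.sum_ite_eq, Finset.mem_univ, if_true, mul_one,
        ← Finset.mul_sum]
    have hdot : star x ⬝ᵥ (Qz n *ᵥ x)
        = (1 - 1/((n:ℝ)+1)) * ∑ k, x k^2 + (1/((n:ℝ)+1)) * ((∑ m, x m) * ∑ m, x m) := by
      simp only [dotProduct, star_trivial]
      calc ∑ k, x k * (Qz n *ᵥ x) k
          = ∑ k, ((1 - 1/((n:ℝ)+1)) * x k^2 + (1/((n:ℝ)+1)) * (∑ m, x m) * x k) :=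
            Finset.sum_congr rfl (fun k _ => by rw [hmv]; ring)
        _ = _ := by
            rw [Finset.sum_add_distrib, ← Finset.mul_sum, ← Finset.mul_sum]
            ring
    rw [hdot]
    have hj' : x j ≠ 0 := by simpa using hj
    have h1 : 0 < ∑ k, x k^2 :=
      Finset.sum_pos' (fun i _ => sq_nonneg _) ⟨j, Finset.mem_univ j, pow_two_pos_of_ne_zero hj'⟩
    have h2 : 0 ≤ (1/((n:ℝ)+1)) * ((∑ m, x m) * ∑ m, x m) := by
      have := mul_self_nonneg (∑ m, x m)
      positivity
    nlinarith

lemma cf_Qz_pos (k l : Fin n) : 0 < cf k l (Qz n) := by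
  have hn : (0:ℝ) < (n:ℝ)+1 := by positivity
  have hnn : (0:ℝ) ≤ (n:ℝ) := Nat.cast_nonneg n
  have hid : (1/((n:ℝ)+1)) * ((n:ℝ)+1) = 1 := by field_simp
  have hepos : 0 < (1:ℝ)/((n:ℝ)+1) := by positivity
  unfold cf
  rcases eq_or_ne k l with h | h
  · subst h; simp only [if_pos rfl]
    have hsum : ∑ m, (Qz n k m + Qz n m k)
        = 2*((1 - 1/((n:ℝ)+1)) + n * (1/((n:ℝ)+1))) := by
      simp [Qz_apply, Finset.sum_add_distrib, add_mul, mul_ite, ite_mul, mul_one, mul_zero,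
        Finset.sum_ite_eq, Finset.sum_ite_eq', Finset.sum_const, card_univ]
      ring
    rw [hsum, Qz_apply]
    simp only [if_pos rfl, if_true, mul_one]
    nlinarith
  · simp only [if_neg h, Qz_apply, if_neg h, if_neg (Ne.symm h)]
    simp only [mul_zero, zero_add]
    positivity


end NashAux

open NashAux

/-- Nash's decomposition of symmetric matrices into primitive metrics:
given a positive definite symmetric `P₀`, there are `σ₀ > 0`, unit vectors
`ξ i` (`i < n(n+1)/2`) and linear maps `L i` on matrices such that every
symmetric `P` equals `∑ i, L i P • ξ i ⊗ ξ i`, with `L i P > 0` whenever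
`‖P - P₀‖ ≤ σ₀`. -/
theorem nash_decomposition (n : ℕ) (P₀ : Matrix (Fin n) (Fin n) ℝ)
    (hsymm : P₀.IsSymm) (hpd : P₀.PosDef) :
    ∃ σ₀ : ℝ, 0 < σ₀ ∧
      ∃ (ξ : Fin (n * (n + 1) / 2) → EuclideanSpace ℝ (Fin n))
        (L : Fin (n * (n + 1) / 2) → Matrix (Fin n) (Fin n) ℝ →ₗ[ℝ] ℝ),
        (∀ i, ‖ξ i‖ = 1) ∧
        (∀ P : Matrix (Fin n) (Fin n) ℝ, P.IsSymm →
          P = ∑ i, L i P • Matrix.vecMulVec (fun j => ξ i j) (fun j => ξ i j)) ∧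
        (∀ P : Matrix (Fin n) (Fin n) ℝ, P.IsSymm → ‖P - P₀‖ ≤ σ₀ →
          ∀ i, 0 < L i P) := by
  classical
  have hcard : Fintype.card {p : Fin n × Fin n // p.1 ≤ p.2} = n * (n + 1) / 2 := by
    rw [← Fintype.card_congr (Sym2.sortEquiv (α := Fin n)), Sym2.card]
    simp [Nat.choose_two_right, Nat.mul_comm]
  let e : Fin (n * (n + 1) / 2) ≃ {p : Fin n × Fin n // p.1 ≤ p.2} :=
    (Fintype.equivFinOfCardEq hcard).symm
  -- square roots
  set S := CFC.sqrt P₀ with hSdef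
  have hSS : S * S = P₀ := CFC.sqrt_mul_sqrt_self P₀ hpd.posSemidef.nonneg
  have hSt : Sᵀ = S := by
    have h := (CFC.sqrt_nonneg P₀).posSemidef.1
    rwa [Matrix.IsHermitian, conjTranspose_eq_transpose_of_trivial] at h
  have hSdet : IsUnit S.det := by
    refine isUnit_iff_ne_zero.mpr (fun h0 => ?_)
    have h1 : S.det * S.det = P₀.det := by rw [← det_mul, hSS]
    rw [h0, mul_zero] at h1
    exact hpd.det_pos.ne' h1.symm
  have hTpd : (Qz n).PosDef := Qz_posDef
  set T := CFC.sqrt (Qz n) with hTdef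
  have hTT : T * T = Qz n := CFC.sqrt_mul_sqrt_self (Qz n) hTpd.posSemidef.nonneg
  have hTt : Tᵀ = T := by
    have h := (CFC.sqrt_nonneg (Qz n)).posSemidef.1
    rwa [Matrix.IsHermitian, conjTranspose_eq_transpose_of_trivial] at h
  have hTdet : IsUnit T.det := by
    refine isUnit_iff_ne_zero.mpr (fun h0 => ?_)
    have h1 : T.det * T.det = (Qz n).det := by rw [← det_mul, hTT]
    rw [h0, mul_zero] at h1
    exact hTpd.det_pos.ne' h1.symm
  have hS1 : S * S⁻¹ = 1 := Matrix.mul_nonsing_inv S hSdet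
  have hS2 : S⁻¹ * S = 1 := Matrix.nonsing_inv_mul S hSdet
  have hT1 : T * T⁻¹ = 1 := Matrix.mul_nonsing_inv T hTdet
  have hT2 : T⁻¹ * T = 1 := Matrix.nonsing_inv_mul T hTdet
  set A := S * T⁻¹ with hAdef
  set C := T * S⁻¹ with hCdef
  have hAC : A * C = 1 := by
    rw [hAdef, hCdef, Matrix.mul_assoc, ← Matrix.mul_assoc T⁻¹, hT2, Matrix.one_mul, hS1]
  have hCA : C * A = 1 := by
    rw [hAdef, hCdef, Matrix.mul_assoc, ← Matrix.mul_assoc S⁻¹, hS2, Matrix.one_mul, hT1]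
  have hCt : Cᵀ = S⁻¹ * T := by
    rw [hCdef, Matrix.transpose_mul, Matrix.transpose_nonsing_inv, hSt, hTt]
  have hCP₀ : C * P₀ * Cᵀ = Qz n := by
    rw [hCt, hCdef, ← hSS]
    calc T * S⁻¹ * (S * S) * (S⁻¹ * T)
        = T * ((S⁻¹ * S) * (S * S⁻¹)) * T := by
          simp only [Matrix.mul_assoc]
      _ = T * T := by rw [hS2, hS1, Matrix.one_mul, Matrix.mul_one]
      _ = Qz n := hTT
  -- vectors
  set u : {p : Fin n × Fin n // p.1 ≤ p.2} → (Fin n → ℝ) :=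
    fun p => A *ᵥ wv p.1.1 p.1.2 with hudef
  have hu : ∀ p, u p ≠ 0 := by
    intro p h0
    have hw : wv p.1.1 p.1.2 = C *ᵥ (u p) := by
      simp only [hudef]
      rw [Matrix.mulVec_mulVec, hCA, Matrix.one_mulVec]
    have : wv p.1.1 p.1.2 = 0 := by rw [hw, h0, Matrix.mulVec_zero]
    have h2 := congrFun this p.1.2
    simp [wv] at h2
    split at h2 <;> linarith
  set ue : {p : Fin n × Fin n // p.1 ≤ p.2} → EuclideanSpace ℝ (Fin n) :=
    fun p => (WithLp.equiv 2 (Fin n → ℝ)).symm (u p) with huedef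
  have hue : ∀ p, ue p ≠ 0 := fun p h => hu p (by simpa [huedef] using congrArg WithLp.ofLp h)
  have huen : ∀ p, ‖ue p‖ ≠ 0 := fun p => norm_ne_zero_iff.mpr (hue p)
  set ξ : Fin (n * (n + 1) / 2) → EuclideanSpace ℝ (Fin n) :=
    fun i => (‖ue (e i)‖⁻¹ : ℝ) • ue (e i) with hξdef
  set L : Fin (n * (n + 1) / 2) → Matrix (Fin n) (Fin n) ℝ →ₗ[ℝ] ℝ :=
    fun i => (‖ue (e i)‖^2 : ℝ) • ((cfL (e i).1.1 (e i).1.2).comp (conjL C)) with hLdef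
  have hLapp : ∀ i P, L i P = ‖ue (e i)‖^2 * cf (e i).1.1 (e i).1.2 (C * P * Cᵀ) := by
    intro i P
    simp [hLdef, cfL, conjL]
  have hunit : ∀ i, ‖ξ i‖ = 1 := fun i => norm_smul_inv_norm (𝕜 := ℝ) (hue (e i))
  have hdecomp : ∀ P : Matrix (Fin n) (Fin n) ℝ, P.IsSymm →
      P = ∑ i, L i P • Matrix.vecMulVec (fun j => ξ i j) (fun j => ξ i j) := by
    intro P hP
    have hconj : ∀ B : Matrix (Fin n) (Fin n) ℝ, (B * P * Bᵀ)ᵀ = B * P * Bᵀ := by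
      intro B
      rw [Matrix.transpose_mul, Matrix.transpose_mul, Matrix.transpose_transpose, hP.eq,
        Matrix.mul_assoc]
    have hQsym : (C * P * Cᵀ).IsSymm := hconj C
    have hterm : ∀ i, L i P • Matrix.vecMulVec (fun j => ξ i j) (fun j => ξ i j)
        = cf (e i).1.1 (e i).1.2 (C * P * Cᵀ) • vecMulVec (u (e i)) (u (e i)) := by
      intro i
      have hfun : (fun j => ξ i j) = fun j => ‖ue (e i)‖⁻¹ * u (e i) j := rfl
      have hvmv : vecMulVec (fun j => ‖ue (e i)‖⁻¹ * u (e i) j)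
          (fun j => ‖ue (e i)‖⁻¹ * u (e i) j)
          = (‖ue (e i)‖⁻¹ * ‖ue (e i)‖⁻¹) • vecMulVec (u (e i)) (u (e i)) := by
        ext a b
        simp only [vecMulVec_apply, Matrix.smul_apply, smul_eq_mul]
        ring
      rw [hfun, hvmv, hLapp, smul_smul]
      congr 1
      have h8 := huen (e i)
      field_simp
    rw [Finset.sum_congr rfl (fun i _ => hterm i)]
    have hsum2 : ∑ i, cf (e i).1.1 (e i).1.2 (C * P * Cᵀ) • vecMulVec (u (e i)) (u (e i))
        = ∑ p : {p : Fin n × Fin n // p.1 ≤ p.2},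
            cf p.1.1 p.1.2 (C * P * Cᵀ) • vecMulVec (u p) (u p) :=
      Equiv.sum_comp e (fun p : {p : Fin n × Fin n // p.1 ≤ p.2} =>
        cf p.1.1 p.1.2 (C * P * Cᵀ) • vecMulVec (u p) (u p))
    rw [hsum2]
    have hterm2 : ∀ p : {p : Fin n × Fin n // p.1 ≤ p.2},
        cf p.1.1 p.1.2 (C * P * Cᵀ) • vecMulVec (u p) (u p)
        = A * (cf p.1.1 p.1.2 (C * P * Cᵀ) • vecMulVec (wv p.1.1 p.1.2) (wv p.1.1 p.1.2)) * Aᵀ := by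
      intro p
      simp only [hudef]
      rw [vecMulVec_conj, Matrix.mul_smul, Matrix.smul_mul]
    rw [Finset.sum_congr rfl (fun p _ => hterm2 p)]
    rw [← Finset.sum_mul, ← Finset.mul_sum]
    rw [base (C * P * Cᵀ) hQsym]
    rw [show A * (C * P * Cᵀ) * Aᵀ = (A * C) * P * (Cᵀ * Aᵀ) by
      simp only [Matrix.mul_assoc]]
    rw [← Matrix.transpose_mul, hAC, Matrix.transpose_one, Matrix.one_mul, Matrix.mul_one]
  have hpos0 : ∀ i, 0 < L i P₀ := by
    intro i
    rw [hLapp, hCP₀]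
    exact mul_pos (pow_pos ((norm_ne_zero_iff.mpr (hue (e i))).lt_of_le' (norm_nonneg _)) 2)
      (cf_Qz_pos _ _)
  have hUopen : IsOpen {P : Matrix (Fin n) (Fin n) ℝ | ∀ i, 0 < L i P} := by
    have hset : {P : Matrix (Fin n) (Fin n) ℝ | ∀ i, 0 < L i P}
        = ⋂ i, (L i) ⁻¹' Set.Ioi 0 := by
      ext x; simp [Set.mem_iInter]
    rw [hset]
    exact isOpen_iInter_of_finite fun i =>
      (isOpen_Ioi).preimage (L i).continuous_of_finiteDimensional
  obtain ⟨r, hr, hball⟩ := Metric.isOpen_iff.mp hUopen P₀ hpos0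
  refine ⟨r/2, by positivity, ξ, L, hunit, hdecomp, ?_⟩
  intro P hPsymm hPnear i
  have hmem : P ∈ Metric.ball P₀ r := by
    rw [Metric.mem_ball, dist_eq_norm]
    calc ‖P - P₀‖ ≤ r/2 := hPnear
      _ < r := by linarith
  exact hball hmem i
end

section
/- Let N ≥ 1, 0 < θ < 1/(1+2N), α > 0, and b = 1 + 2Nθα/(1 − θ(1+2N)). If α < (1 − θ(1+2N))/(2(1−θ)), then b + 2θN(b−1) + 2θ(N−1)α < b² − θα. -/
/-- Refined parameter inequality: with `0 < θ < 1/(1+2N)`, `α > 0`,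
`b = 1 + 2Nθα/(1 − θ(1+2N))`, if `α < (1 − θ(1+2N))/(2(1−θ))` then
`b + 2θN(b−1) + 2θ(N−1)α < b² − θα`. -/
theorem refined_parameter_inequality (N : ℕ) (hN : 1 ≤ N) (θ α b : ℝ)
    (hθ0 : 0 < θ) (hθ : θ < 1 / (1 + 2 * N))
    (hα : 0 < α)
    (hb : b = 1 + 2 * N * θ * α / (1 - θ * (1 + 2 * N)))
    (hαsmall : α < (1 - θ * (1 + 2 * N)) / (2 * (1 - θ))) :
    b + 2 * θ * N * (b - 1) + 2 * θ * (N - 1) * α < b ^ 2 - θ * α := by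
  have hP : (0:ℝ) < 1 + 2 * N := by positivity
  have hD : 0 < 1 - θ * (1 + 2 * N) := by
    have := (lt_div_iff₀ hP).mp hθ
    linarith
  have hc : 0 < 2 * N * θ * α / (1 - θ * (1 + 2 * N)) := by
    have hN' : (0:ℝ) < N := by exact_mod_cast hN
    positivity
  have key : (b - 1) * (1 - θ * (1 + 2 * N)) = 2 * N * θ * α := by
    rw [hb]; field_simp; ring
  nlinarith [sq_nonneg (b - 1), mul_pos hθ0 hα, hc, key, sq_nonneg b]
end
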